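/- There exists a pair of set-system hypergraphs G and H such that there is a hypergraph homomorphism from G to H, but there is no graph homomorphism from the clique-replacement graph Γ(G) to Γ(H). Consequently, no functor M from the category of set-system hypergraphs to the category of simple graphs satisfies M(G) = Γ(G) on objects. -/

import Mathlib

/-- A set-system hypergraph: edge set, vertex set, and endpoint assignment. -/
structure SSHyp : Type 1 where
  E : Type
  V : Type
  eps : E → Set V

/-- A traditional set-system hypergraph homomorphism. -/
structure TradHom (G H : SSHyp) where
  fe : G.E → H.E
  fv : G.V → H.V
  comm : ∀ e, H.eps (fe e) = fv '' G.eps e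

def TradHom.idH (G : SSHyp) : TradHom G G :=
  ⟨id, id, fun e => (Set.image_id _).symm⟩

def TradHom.comp {G H K : SSHyp} (φ : TradHom G H) (ψ : TradHom H K) : TradHom G K :=
  ⟨ψ.fe ∘ φ.fe, ψ.fv ∘ φ.fv, fun e => by
    rw [Function.comp_apply, ψ.comm, φ.comm, Set.image_comp]⟩

/-- A set system: vertex set with a family of subsets as edges. -/
structure SetSys : Type 1 where
  V : Type
  edges : Set (Set V)

/-- A set-system (graph) homomorphism: vertex map sending edges to edges. -/
def IsSSHom (G H : SetSys) (f : G.V → H.V) : Prop :=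
  ∀ A ∈ G.edges, f '' A ∈ H.edges

/-- The clique-replacement graph Γ(G). -/
def clique (G : SSHyp) : SetSys :=
  ⟨G.V, {A | ∃ v w e, v ≠ w ∧ A = {v, w} ∧ v ∈ G.eps e ∧ w ∈ G.eps e}⟩


/-- The triangle hypergraph: one edge containing all three vertices. -/
abbrev Gtri : SSHyp := ⟨Unit, Fin 3, fun _ => Set.univ⟩

/-- The single-edge hypergraph on two vertices. -/
abbrev Hedge : SSHyp := ⟨Unit, Fin 2, fun _ => Set.univ⟩

def triHom : TradHom Gtri Hedge :=
  ⟨id, (![0, 1, 0] : Fin 3 → Fin 2), fun _ => by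
    ext x
    simp only [Hedge, Gtri, Set.mem_univ, Set.mem_image, true_iff, true_and]
    fin_cases x
    · exact ⟨0, rfl⟩
    · exact ⟨1, rfl⟩⟩

lemma no_graph_hom :
    ¬ ∃ f : (clique Gtri).V → (clique Hedge).V,
      IsSSHom (clique Gtri) (clique Hedge) f := by
  rintro ⟨f, hf⟩
  have key : ∀ v w : Fin 3, v ≠ w → f v ≠ f w := by
    intro v w hvw
    have hmem : ({v, w} : Set (Fin 3)) ∈ (clique Gtri).edges :=
      ⟨v, w, (), hvw, rfl, Set.mem_univ _, Set.mem_univ _⟩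
    obtain ⟨a, b, e, hab, hA, -, -⟩ := hf _ hmem
    erw [Set.image_pair] at hA
    intro hfvw
    rw [hfvw, Set.pair_eq_singleton] at hA
    have ha : a ∈ ({f w} : Set (Fin 2)) :=
      (Set.ext_iff.mp hA a).mpr (Set.mem_insert _ _)
    have hb : b ∈ ({f w} : Set (Fin 2)) :=
      (Set.ext_iff.mp hA b).mpr (Set.mem_insert_of_mem _ rfl)
    exact hab ((Set.mem_singleton_iff.mp ha).trans (Set.mem_singleton_iff.mp hb).symm)
  obtain ⟨v, w, hvw, heq⟩ :=
    Fintype.exists_ne_map_eq_of_card_lt (α := Fin 3) (β := Fin 2) f (by simp)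
  exact key v w hvw heq

/-- There are set-system hypergraphs `G`, `H` with a homomorphism `G → H` but no graph
homomorphism `Γ(G) → Γ(H)`; consequently no functor `M : H → Gra` satisfies
`M(G) = Γ(G)` on objects. -/
theorem clique_replacement_not_functorial :
    (∃ G H : SSHyp, Nonempty (TradHom G H) ∧
      ¬ ∃ f : (clique G).V → (clique H).V, IsSSHom (clique G) (clique H) f) ∧
    ¬ ∃ M : ∀ G H : SSHyp, TradHom G H →
        {f : (clique G).V → (clique H).V // IsSSHom (clique G) (clique H) f},
      (∀ G : SSHyp, (M G G (TradHom.idH G)).val = id) ∧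
      (∀ (G H K : SSHyp) (φ : TradHom G H) (ψ : TradHom H K),
        (M G K (φ.comp ψ)).val = (M H K ψ).val ∘ (M G H φ).val) := by
  refine ⟨⟨Gtri, Hedge, ⟨triHom⟩, no_graph_hom⟩, ?_⟩
  rintro ⟨M, -, -⟩
  exact no_graph_hom ⟨(M Gtri Hedge triHom).val, (M Gtri Hedge triHom).property⟩
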